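/- For every n > N there exists a set of n points on S^N that is equator-balanced: for every great circle passing through N of the points, each of the two open hemispheres contains at least ⌊(n-N)/2⌋ of the remaining points. Concretely, the normalizations of the vectors y_i = (-1)^i (1, i, i^2, …, i^N), i = 1,…,n, form such a set. -/

import Mathlib

open scoped RealInnerProductSpace

/-- The Vandermonde-type vectors `y i = (-1)^i • (1, i, i², …, i^N)` for `i = 1, …, n`,
here indexed by `i : Fin n` via `i.val + 1`. -/
noncomputable def vanderVec (N n : ℕ) (i : Fin n) : EuclideanSpace ℝ (Fin (N + 1)) :=
  WithLp.toLp 2 (fun j => (-1 : ℝ) ^ ((i : ℕ) + 1) * ((i : ℕ) + 1 : ℝ) ^ (j : ℕ))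

/-- The normalizations of the vectors `y i`, lying on the unit sphere `S^N`. -/
noncomputable def vanderPoint (N n : ℕ) (i : Fin n) : EuclideanSpace ℝ (Fin (N + 1)) :=
  ‖vanderVec N n i‖⁻¹ • vanderVec N n i

section Aux

open Finset Polynomial

lemma vander_factor_lemma {N : ℕ} (Q : Polynomial ℝ) (hQ : Q ≠ 0) (hdeg : Q.natDegree ≤ N)
    (s : Finset ℝ) (hcard : s.card = N) (hroots : ∀ x ∈ s, Q.eval x = 0) :
    ∃ c : ℝ, c ≠ 0 ∧ ∀ x : ℝ, Q.eval x = c * ∏ r ∈ s, (x - r) := by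
  set P : Polynomial ℝ := ∏ r ∈ s, (X - C r) with hP
  have hPmonic : P.Monic := monic_prod_of_monic _ _ fun r _ => monic_X_sub_C r
  have hPdeg : P.natDegree = N := by
    rw [hP, natDegree_prod _ _ fun r _ => X_sub_C_ne_zero r]
    simp [hcard]
  set c := Q.coeff N with hc
  have small : ∀ R : Polynomial ℝ, R.natDegree ≤ N → R.coeff N = 0 →
      (∀ x ∈ s, R.eval x = 0) → R = 0 := by
    intro R hRdeg hRc hRroots
    by_contra hR
    have hlt : R.natDegree < N := by
      rcases lt_or_eq_of_le hRdeg with h | h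
      · exact h
      · exfalso
        apply hR
        apply leadingCoeff_eq_zero.mp
        rw [leadingCoeff, h, hRc]
    exact hR (eq_zero_of_natDegree_lt_card_of_eval_eq_zero' R s hRroots (by omega))
  have hcne : c ≠ 0 := by
    intro h
    exact hQ (small Q hdeg h hroots)
  refine ⟨c, hcne, ?_⟩
  have hD : Q - C c * P = 0 := by
    apply small
    · exact le_trans (natDegree_sub_le _ _) (by
        simp only [max_le_iff]
        exact ⟨hdeg, le_trans (natDegree_C_mul_le _ _) (le_of_eq hPdeg)⟩)
    · rw [coeff_sub, coeff_C_mul, ← hPdeg, hPmonic.coeff_natDegree, hPdeg]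
      simp [hc]
    · intro x hx
      have : P.eval x = 0 := by
        rw [hP, eval_prod]
        exact Finset.prod_eq_zero hx (by simp)
      simp [hroots x hx, this]
  have hQP : Q = C c * P := by linear_combination (norm := ring_nf) hD
  intro x
  rw [hQP, eval_mul, eval_C, hP, eval_prod]
  simp

lemma vander_card_mod2_range (m r : ℕ) (hr : r < 2) :
    ((range m).filter (fun k => k % 2 = r)).card = (m + 1 - r) / 2 := by
  induction m with
  | zero => simp; omega
  | succ m ih =>
    rw [Finset.range_add_one, Finset.filter_insert]
    by_cases h : m % 2 = r
    · rw [if_pos h, Finset.card_insert_of_notMem (by simp), ih]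
      omega
    · rw [if_neg h, ih]
      omega

lemma vander_fin_filter_card (m : ℕ) (P : ℕ → Prop) [DecidablePred P] :
    ((univ : Finset (Fin m)).filter (fun k => P k.val)).card = ((range m).filter P).card := by
  rw [Finset.card_filter, Finset.card_filter]
  exact Fin.sum_univ_eq_sum_range (fun k => if P k then 1 else 0) m

lemma vander_alt_count {m : ℕ} (b : Fin m → Bool)
    (halt : ∀ (k : ℕ) (h : k + 1 < m), b ⟨k + 1, h⟩ = !b ⟨k, by omega⟩) :
    m / 2 ≤ ((univ : Finset (Fin m)).filter (fun k => b k = true)).card ∧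
      m / 2 ≤ ((univ : Finset (Fin m)).filter (fun k => b k = false)).card := by
  rcases Nat.eq_zero_or_pos m with hm | hm
  · subst hm; simp
  set b0 := b ⟨0, hm⟩ with hb0
  have hb : ∀ (K : ℕ) (h : K < m), b ⟨K, h⟩ = xor (decide (K % 2 = 1)) b0 := by
    intro K
    induction K with
    | zero => intro h; simp [hb0]
    | succ K ih =>
      intro h
      rw [halt K h, ih (by omega)]
      rcases Nat.even_or_odd K with he | he
      · have h1 : K % 2 = 0 := Nat.even_iff.mp he
        have h2 : (K+1) % 2 = 1 := by omega
        simp [h1, h2]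
      · have h1 : K % 2 = 1 := Nat.odd_iff.mp he
        have h2 : (K+1) % 2 = 0 := by omega
        simp [h1, h2]
  have key : ∀ c : Bool, m / 2 ≤ ((univ : Finset (Fin m)).filter (fun k => b k = c)).card := by
    intro c
    have heq : ((univ : Finset (Fin m)).filter (fun k => b k = c)) =
        ((univ : Finset (Fin m)).filter (fun k => xor (decide (k.val % 2 = 1)) b0 = c)) := by
      apply Finset.filter_congr
      intro k _
      rw [show b k = b ⟨k.val, k.isLt⟩ from rfl, hb k.val k.isLt]
    rw [heq]
    rcases Bool.eq_false_or_eq_true (xor b0 c) with h | h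
    · -- b0 ≠ c : condition is k % 2 = 1
      have hiff : ∀ k : ℕ, (xor (decide (k % 2 = 1)) b0 = c) ↔ (k % 2 = 1) := by
        intro k
        rcases Bool.eq_false_or_eq_true b0 with h0 | h0 <;>
          rcases Bool.eq_false_or_eq_true c with h1 | h1 <;>
          simp [h0, h1] at h ⊢
      calc m / 2 = (m + 1 - 1) / 2 := by omega
        _ = ((range m).filter (fun k => k % 2 = 1)).card :=
            (vander_card_mod2_range m 1 (by omega)).symm
        _ = _ := by
            rw [← vander_fin_filter_card m (fun k => k % 2 = 1)]
            apply congrArg Finset.card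
            apply Finset.filter_congr
            intro k _
            simp only [hiff k.val, decide_eq_decide]
        _ ≤ _ := le_refl _
    · -- b0 = c : condition is k % 2 = 0
      have hiff : ∀ k : ℕ, (xor (decide (k % 2 = 1)) b0 = c) ↔ (k % 2 = 0) := by
        intro k
        rcases Bool.eq_false_or_eq_true b0 with h0 | h0 <;>
          rcases Bool.eq_false_or_eq_true c with h1 | h1 <;>
          simp [h0, h1] at h ⊢
      calc m / 2 ≤ (m + 1 - 0) / 2 := by omega
        _ = ((range m).filter (fun k => k % 2 = 0)).card :=
            (vander_card_mod2_range m 0 (by omega)).symm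
        _ = _ := by
            rw [← vander_fin_filter_card m (fun k => k % 2 = 0)]
            apply congrArg Finset.card
            apply Finset.filter_congr
            intro k _
            simp only [hiff k.val, decide_eq_decide]
  exact ⟨key true, key false⟩

lemma vanderVec_ne (N n : ℕ) (i : Fin n) : vanderVec N n i ≠ 0 := by
  intro h
  have := congrArg (fun v : EuclideanSpace ℝ (Fin (N + 1)) => v ⟨0, Nat.succ_pos N⟩) h
  simp [vanderVec] at this

lemma vanderPoint_norm (N n : ℕ) (i : Fin n) : ‖vanderPoint N n i‖ = 1 := by
  have h : ‖vanderVec N n i‖ ≠ 0 := norm_ne_zero_iff.mpr (vanderVec_ne N n i)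
  rw [vanderPoint, norm_smul, norm_inv, norm_norm, inv_mul_cancel₀ h]

end Aux

theorem stmt_4 (N n : ℕ) (hn : N < n) :
    (∀ i, ‖vanderPoint N n i‖ = 1) ∧
    ∀ s : Finset (Fin n), s.card = N →
      ∀ p : EuclideanSpace ℝ (Fin (N + 1)), ‖p‖ = 1 →
        (∀ i ∈ s, ⟪vanderPoint N n i, p⟫ = 0) →
        (n - N) / 2 ≤
            (Finset.univ.filter fun i => i ∉ s ∧ 0 < ⟪vanderPoint N n i, p⟫).card ∧
        (n - N) / 2 ≤
            (Finset.univ.filter fun i => i ∉ s ∧ ⟪vanderPoint N n i, p⟫ < 0).card := by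
  classical
  open Finset Polynomial in
  refine ⟨vanderPoint_norm N n, ?_⟩
  intro s hs p hp hperp
  -- the polynomial with coefficients p
  set Q : Polynomial ℝ := ∑ j : Fin (N+1), Polynomial.C (p j) * Polynomial.X ^ (j : ℕ) with hQdef
  have hQeval : ∀ x : ℝ, Q.eval x = ∑ j : Fin (N+1), p j * x ^ (j : ℕ) := by
    intro x
    rw [hQdef, Polynomial.eval_finset_sum]
    simp
  have hcoeff : ∀ j : Fin (N+1), Q.coeff (j : ℕ) = p j := by
    intro j
    rw [hQdef, Polynomial.finset_sum_coeff]
    rw [Finset.sum_eq_single j]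
    · simp
    · intro j' _ hj'
      rw [Polynomial.coeff_C_mul, Polynomial.coeff_X_pow, if_neg, mul_zero]
      exact fun h => hj' (Fin.ext h.symm)
    · simp
  have hpne : p ≠ 0 := by
    intro h
    rw [h, norm_zero] at hp
    exact one_ne_zero hp.symm
  have hQne : Q ≠ 0 := by
    intro h
    apply hpne
    ext j
    rw [← hcoeff j, h, Polynomial.coeff_zero]
    rfl
  have hQdeg : Q.natDegree ≤ N := by
    rw [hQdef]
    apply Polynomial.natDegree_sum_le_of_forall_le
    intro j _
    exact le_trans (Polynomial.natDegree_C_mul_le _ _)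
      (by rw [Polynomial.natDegree_X_pow]; exact Fin.is_le j)
  -- inner products in terms of Q
  have hinner : ∀ i : Fin n, ⟪vanderPoint N n i, p⟫ =
      ‖vanderVec N n i‖⁻¹ * ((-1 : ℝ) ^ ((i : ℕ) + 1) * Q.eval (((i : ℕ) : ℝ) + 1)) := by
    intro i
    rw [vanderPoint, real_inner_smul_left, hQeval]
    congr 1
    simp only [PiLp.inner_apply, vanderVec, RCLike.inner_apply, conj_trivial, Finset.mul_sum,
      WithLp.ofLp_toLp]
    apply Finset.sum_congr rfl
    intro j _
    ring
  have hnormpos : ∀ i : Fin n, (0:ℝ) < ‖vanderVec N n i‖⁻¹ := by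
    intro i
    exact inv_pos.mpr (norm_pos_iff.mpr (vanderVec_ne N n i))
  -- the roots
  have hinj : Function.Injective (fun i : Fin n => ((i : ℕ) : ℝ) + 1) := by
    intro i j h
    apply Fin.ext
    exact_mod_cast add_right_cancel h
  have hroots : ∀ x ∈ s.image (fun i : Fin n => ((i : ℕ) : ℝ) + 1), Q.eval x = 0 := by
    intro x hx
    rcases Finset.mem_image.mp hx with ⟨i, hi, rfl⟩
    have h0 := hperp i hi
    rw [hinner i] at h0
    rcases mul_eq_zero.mp h0 with h | h
    · exact absurd h (ne_of_gt (hnormpos i))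
    · rcases mul_eq_zero.mp h with h | h
      · exact absurd h (pow_ne_zero _ (by norm_num))
      · exact h
  obtain ⟨c, hc, hfac⟩ := vander_factor_lemma Q hQne hQdeg _
    (by rw [Finset.card_image_of_injective _ hinj, hs]) hroots
  -- inner product as product of linear factors
  have hfac' : ∀ j : Fin n, ⟪vanderPoint N n j, p⟫ =
      (‖vanderVec N n j‖⁻¹ * (-1 : ℝ) ^ ((j : ℕ) + 1) * c) *
        ∏ i ∈ s, (((j : ℕ) : ℝ) - ((i : ℕ) : ℝ)) := by
    intro j
    rw [hinner j, hfac, Finset.prod_image (fun a _ b _ h => hinj h)]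
    rw [show ∏ i ∈ s, ((((j : ℕ) : ℝ) + 1) - (((i : ℕ) : ℝ) + 1))
        = ∏ i ∈ s, (((j : ℕ) : ℝ) - ((i : ℕ) : ℝ)) from
      Finset.prod_congr rfl (fun i _ => by ring)]
    ring
  -- nonvanishing off s
  have hprodne : ∀ j : Fin n, j ∉ s → (∏ i ∈ s, (((j : ℕ) : ℝ) - ((i : ℕ) : ℝ))) ≠ 0 := by
    intro j hj
    apply Finset.prod_ne_zero_iff.mpr
    intro i hi
    have : i ≠ j := fun h => hj (h ▸ hi)
    intro h
    apply this
    apply Fin.ext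
    have : ((i : ℕ) : ℝ) = ((j : ℕ) : ℝ) := by linarith [sub_eq_zero.mp h]
    exact_mod_cast this
  have hinner_ne : ∀ j : Fin n, j ∉ s → ⟪vanderPoint N n j, p⟫ ≠ 0 := by
    intro j hj
    rw [hfac' j]
    apply mul_ne_zero _ (hprodne j hj)
    apply mul_ne_zero _ hc
    exact mul_ne_zero (ne_of_gt (hnormpos j)) (pow_ne_zero _ (by norm_num))
  -- sign alternation on consecutive non-s points
  have hpair : ∀ a a' : Fin n, a ∉ s → a' ∉ s → a < a' →
      (∀ j : Fin n, a < j → j < a' → j ∈ s) →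
      ⟪vanderPoint N n a, p⟫ * ⟪vanderPoint N n a', p⟫ < 0 := by
    intro a a' ha ha' haa hbetween
    rw [hfac' a, hfac' a']
    have hsplit : ∏ i ∈ s, ((((a : ℕ) : ℝ) - ((i : ℕ) : ℝ)) * (((a' : ℕ) : ℝ) - ((i : ℕ) : ℝ)))
        = (∏ i ∈ s.filter (fun i => a < i ∧ i < a'),
            ((((a : ℕ) : ℝ) - ((i : ℕ) : ℝ)) * (((a' : ℕ) : ℝ) - ((i : ℕ) : ℝ)))) *
          ∏ i ∈ s.filter (fun i => ¬(a < i ∧ i < a')),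
            ((((a : ℕ) : ℝ) - ((i : ℕ) : ℝ)) * (((a' : ℕ) : ℝ) - ((i : ℕ) : ℝ))) :=
      (Finset.prod_filter_mul_prod_filter_not s _ _).symm
    have hIoo : s.filter (fun i => a < i ∧ i < a') = Finset.Ioo a a' := by
      ext j
      simp only [Finset.mem_filter, Finset.mem_Ioo]
      constructor
      · rintro ⟨_, h⟩; exact h
      · rintro ⟨h1, h2⟩; exact ⟨hbetween j h1 h2, h1, h2⟩
    have hcardIoo : (s.filter (fun i => a < i ∧ i < a')).card = (a' : ℕ) - (a : ℕ) - 1 := by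
      rw [hIoo, Fin.card_Ioo]
    -- the middle product is (-1)^(A'-A-1) times a positive number
    have hmid : ∏ i ∈ s.filter (fun i => a < i ∧ i < a'),
        ((((a : ℕ) : ℝ) - ((i : ℕ) : ℝ)) * (((a' : ℕ) : ℝ) - ((i : ℕ) : ℝ)))
        = (-1 : ℝ) ^ ((a' : ℕ) - (a : ℕ) - 1) *
          ∏ i ∈ s.filter (fun i => a < i ∧ i < a'),
            ((((i : ℕ) : ℝ) - ((a : ℕ) : ℝ)) * (((a' : ℕ) : ℝ) - ((i : ℕ) : ℝ))) := by
      rw [← hcardIoo, ← Finset.prod_const (-1 : ℝ), ← Finset.prod_mul_distrib]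
      apply Finset.prod_congr rfl
      intro i _
      ring
    have hmidpos : (0:ℝ) < ∏ i ∈ s.filter (fun i => a < i ∧ i < a'),
        ((((i : ℕ) : ℝ) - ((a : ℕ) : ℝ)) * (((a' : ℕ) : ℝ) - ((i : ℕ) : ℝ))) := by
      apply Finset.prod_pos
      intro i hi
      rcases Finset.mem_filter.mp hi with ⟨_, h1, h2⟩
      have c1 : ((a : ℕ) : ℝ) < ((i : ℕ) : ℝ) := by exact_mod_cast h1
      have c2 : ((i : ℕ) : ℝ) < ((a' : ℕ) : ℝ) := by exact_mod_cast h2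
      exact mul_pos (by linarith) (by linarith)
    have houtpos : (0:ℝ) < ∏ i ∈ s.filter (fun i => ¬(a < i ∧ i < a')),
        ((((a : ℕ) : ℝ) - ((i : ℕ) : ℝ)) * (((a' : ℕ) : ℝ) - ((i : ℕ) : ℝ))) := by
      apply Finset.prod_pos
      intro i hi
      rcases Finset.mem_filter.mp hi with ⟨his, hnot⟩
      have hia : i ≠ a := fun h => ha (h ▸ his)
      have hia' : i ≠ a' := fun h => ha' (h ▸ his)
      have : i < a ∨ a' < i := by
        rcases lt_trichotomy i a with h | h | h
        · exact Or.inl h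
        · exact absurd h hia
        · rcases lt_trichotomy i a' with h' | h' | h'
          · exact absurd ⟨h, h'⟩ hnot
          · exact absurd h' hia'
          · exact Or.inr h'
      rcases this with h | h
      · have c1 : ((i : ℕ) : ℝ) < ((a : ℕ) : ℝ) := by exact_mod_cast h
        have c2 : ((a : ℕ) : ℝ) < ((a' : ℕ) : ℝ) := by exact_mod_cast haa
        exact mul_pos (by linarith) (by linarith)
      · have c1 : ((a' : ℕ) : ℝ) < ((i : ℕ) : ℝ) := by exact_mod_cast h
        have c2 : ((a : ℕ) : ℝ) < ((a' : ℕ) : ℝ) := by exact_mod_cast haa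
        exact mul_pos_of_neg_of_neg (by linarith) (by linarith)
    -- assemble
    have hexp : (-1 : ℝ) ^ ((a : ℕ) + 1) * (-1 : ℝ) ^ ((a' : ℕ) + 1) *
        (-1 : ℝ) ^ ((a' : ℕ) - (a : ℕ) - 1) = -1 := by
      rw [← pow_add, ← pow_add]
      have : ((a : ℕ) + 1) + ((a' : ℕ) + 1) + ((a' : ℕ) - (a : ℕ) - 1) = 2 * (a' : ℕ) + 1 := by
        have : (a : ℕ) < (a' : ℕ) := haa
        omega
      rw [this, pow_succ, pow_mul]
      norm_num
    calc (‖vanderVec N n a‖⁻¹ * (-1 : ℝ) ^ ((a : ℕ) + 1) * c) *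
          (∏ i ∈ s, (((a : ℕ) : ℝ) - ((i : ℕ) : ℝ))) *
        ((‖vanderVec N n a'‖⁻¹ * (-1 : ℝ) ^ ((a' : ℕ) + 1) * c) *
          ∏ i ∈ s, (((a' : ℕ) : ℝ) - ((i : ℕ) : ℝ)))
        = (‖vanderVec N n a‖⁻¹ * ‖vanderVec N n a'‖⁻¹ * (c * c)) *
          ((-1 : ℝ) ^ ((a : ℕ) + 1) * (-1 : ℝ) ^ ((a' : ℕ) + 1) *
            ∏ i ∈ s, ((((a : ℕ) : ℝ) - ((i : ℕ) : ℝ)) * (((a' : ℕ) : ℝ) - ((i : ℕ) : ℝ)))) := by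
          rw [Finset.prod_mul_distrib]
          ring
      _ < 0 := by
          apply mul_neg_of_pos_of_neg
          · exact mul_pos (mul_pos (hnormpos a) (hnormpos a')) (mul_self_pos.mpr hc)
          · rw [hsplit, hmid]
            calc (-1 : ℝ) ^ ((a : ℕ) + 1) * (-1 : ℝ) ^ ((a' : ℕ) + 1) *
                  ((-1 : ℝ) ^ ((a' : ℕ) - (a : ℕ) - 1) *
                    (∏ i ∈ s.filter (fun i => a < i ∧ i < a'),
                      ((((i : ℕ) : ℝ) - ((a : ℕ) : ℝ)) * (((a' : ℕ) : ℝ) - ((i : ℕ) : ℝ)))) *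
                    ∏ i ∈ s.filter (fun i => ¬(a < i ∧ i < a')),
                      ((((a : ℕ) : ℝ) - ((i : ℕ) : ℝ)) * (((a' : ℕ) : ℝ) - ((i : ℕ) : ℝ))))
                = ((-1 : ℝ) ^ ((a : ℕ) + 1) * (-1 : ℝ) ^ ((a' : ℕ) + 1) *
                    (-1 : ℝ) ^ ((a' : ℕ) - (a : ℕ) - 1)) *
                  ((∏ i ∈ s.filter (fun i => a < i ∧ i < a'),
                      ((((i : ℕ) : ℝ) - ((a : ℕ) : ℝ)) * (((a' : ℕ) : ℝ) - ((i : ℕ) : ℝ)))) *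
                    ∏ i ∈ s.filter (fun i => ¬(a < i ∧ i < a')),
                      ((((a : ℕ) : ℝ) - ((i : ℕ) : ℝ)) * (((a' : ℕ) : ℝ) - ((i : ℕ) : ℝ)))) := by
                  ring
              _ < 0 := by
                  rw [hexp]
                  have := mul_pos hmidpos houtpos
                  linarith
  -- enumerate the complement of s
  have hTcard : (sᶜ : Finset (Fin n)).card = n - N := by
    rw [Finset.card_compl, hs, Fintype.card_fin]
  set m := n - N with hm
  set e : Fin m ↪o Fin n := (sᶜ : Finset (Fin n)).orderEmbOfFin hTcard with he
  have hemem : ∀ k : Fin m, e k ∉ s := by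
    intro k
    have := Finset.orderEmbOfFin_mem (sᶜ : Finset (Fin n)) hTcard k
    exact Finset.mem_compl.mp this
  set b : Fin m → Bool := fun k => decide (0 < ⟪vanderPoint N n (e k), p⟫) with hb
  have halt : ∀ (k : ℕ) (h : k + 1 < m), b ⟨k + 1, h⟩ = !b ⟨k, by omega⟩ := by
    intro k h
    set a : Fin n := e ⟨k, by omega⟩ with ha
    set a' : Fin n := e ⟨k + 1, h⟩ with ha'
    have haa : a < a' := by
      apply (Finset.orderEmbOfFin (sᶜ : Finset (Fin n)) hTcard).strictMono
      simp [Fin.lt_def]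
    have hbet : ∀ j : Fin n, a < j → j < a' → j ∈ s := by
      intro j h1 h2
      by_contra hj
      have hjT : j ∈ (sᶜ : Finset (Fin n)) := Finset.mem_compl.mpr hj
      have : j ∈ Set.range (Finset.orderEmbOfFin (sᶜ : Finset (Fin n)) hTcard) := by
        rw [Finset.range_orderEmbOfFin]
        exact hjT
      rcases this with ⟨l, rfl⟩
      have hl1 : (⟨k, by omega⟩ : Fin m) < l :=
        (Finset.orderEmbOfFin (sᶜ : Finset (Fin n)) hTcard).strictMono.lt_iff_lt.mp h1
      have hl2 : l < (⟨k + 1, h⟩ : Fin m) :=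
        (Finset.orderEmbOfFin (sᶜ : Finset (Fin n)) hTcard).strictMono.lt_iff_lt.mp h2
      have hk1 : k < (l : ℕ) := hl1
      have hk2 : (l : ℕ) < k + 1 := hl2
      omega
    have hneg := hpair a a' (hemem _) (hemem _) haa hbet
    have hane := hinner_ne a (hemem _)
    have ha'ne := hinner_ne a' (hemem _)
    rcases mul_neg_iff.mp hneg with ⟨hx, hy⟩ | ⟨hx, hy⟩
    · simp only [hb, ha, ha']
      rw [decide_eq_true hx, decide_eq_false (not_lt.mpr (le_of_lt hy)), Bool.not_true]
    · simp only [hb, ha, ha']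
      rw [decide_eq_true hy, decide_eq_false (not_lt.mpr (le_of_lt hx)), Bool.not_false]
  obtain ⟨hpos, hneg⟩ := vander_alt_count b halt
  have hrange : ∀ i : Fin n, i ∉ s → ∃ k : Fin m, e k = i := by
    intro i his
    have : i ∈ Set.range (Finset.orderEmbOfFin (sᶜ : Finset (Fin n)) hTcard) := by
      rw [Finset.range_orderEmbOfFin]
      exact Finset.mem_compl.mpr his
    rcases this with ⟨k, hk⟩
    exact ⟨k, hk⟩
  constructor
  · refine le_trans hpos (le_of_eq ?_)
    apply Finset.card_bij (fun (k : Fin m) _ => e k)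
    · intro k hk
      rcases Finset.mem_filter.mp hk with ⟨-, hbk⟩
      refine Finset.mem_filter.mpr ⟨Finset.mem_univ _, hemem k, ?_⟩
      exact of_decide_eq_true hbk
    · intro k1 _ k2 _ hk
      exact e.injective hk
    · intro i hi
      rcases Finset.mem_filter.mp hi with ⟨-, his, hPi⟩
      rcases hrange i his with ⟨k, rfl⟩
      refine ⟨k, Finset.mem_filter.mpr ⟨Finset.mem_univ _, ?_⟩, rfl⟩
      exact decide_eq_true hPi
  · refine le_trans hneg (le_of_eq ?_)
    apply Finset.card_bij (fun (k : Fin m) _ => e k)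
    · intro k hk
      rcases Finset.mem_filter.mp hk with ⟨-, hbk⟩
      refine Finset.mem_filter.mpr ⟨Finset.mem_univ _, hemem k, ?_⟩
      have hle : ¬ (0 < ⟪vanderPoint N n (e k), p⟫) := of_decide_eq_false hbk
      exact lt_of_le_of_ne (not_lt.mp hle) (hinner_ne (e k) (hemem k))
    · intro k1 _ k2 _ hk
      exact e.injective hk
    · intro i hi
      rcases Finset.mem_filter.mp hi with ⟨-, his, hPi⟩
      rcases hrange i his with ⟨k, rfl⟩
      refine ⟨k, Finset.mem_filter.mpr ⟨Finset.mem_univ _, ?_⟩, rfl⟩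
      exact decide_eq_false (not_lt.mpr (le_of_lt hPi))
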